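/- For fixed λ > 0, the function φ(λ, β) = N ln(1 + 1/λ) + N ln β − N ln λ + β S − 2 Σ_{i=1}^N ln(1 + X_i^β/λ), with S = Σ ln X_i and all X_i > 1, tends to −∞ as β → ∞. -/
import Mathlib


open Real Filter

/-- For fixed λ > 0 and data X_i > 1 (N ≥ 2), the objective
φ(λ, β) = N ln(1 + 1/λ) + N ln β − N ln λ + β S − 2 Σ ln(1 + X_i^β/λ),
with S = Σ ln X_i, tends to −∞ as β → ∞. -/
theorem phi_tendsto_atBot_atTop (N : ℕ) (hN : 2 ≤ N) (X : Fin N → ℝ) (hX : ∀ i, 1 < X i)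
    (lam : ℝ) (hlam : 0 < lam) :
    Tendsto (fun β : ℝ =>
        (N : ℝ) * Real.log (1 + 1 / lam) + (N : ℝ) * Real.log β - (N : ℝ) * Real.log lam +
          β * (∑ i, Real.log (X i)) - 2 * ∑ i, Real.log (1 + (X i) ^ β / lam))
      atTop atBot := by
  set S := ∑ i, Real.log (X i) with hSdef
  have hS0 : 0 < S := Finset.sum_pos (fun i _ => Real.log_pos (hX i))
    ⟨⟨0, by omega⟩, Finset.mem_univ _⟩
  have key : ∀ β : ℝ,
      (N : ℝ) * Real.log (1 + 1 / lam) + (N : ℝ) * Real.log β - (N : ℝ) * Real.log lam +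
        β * S - 2 * ∑ i, Real.log (1 + (X i) ^ β / lam) ≤
      ((N : ℝ) * Real.log (1 + 1 / lam) + (N : ℝ) * Real.log lam) +
        ((N : ℝ) * Real.log β - β * S) := by
    intro β
    have hsum : β * S - (N : ℝ) * Real.log lam ≤ ∑ i, Real.log (1 + (X i) ^ β / lam) := by
      have h1 : ∀ i ∈ Finset.univ, β * Real.log (X i) - Real.log lam
          ≤ Real.log (1 + (X i) ^ β / lam) := by
        intro i _
        have hx : (0:ℝ) < X i := lt_trans one_pos (hX i)
        have hr : 0 < (X i) ^ β := Real.rpow_pos_of_pos hx β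
        have hpos : 0 < (X i) ^ β / lam := div_pos hr hlam
        calc β * Real.log (X i) - Real.log lam = Real.log ((X i) ^ β / lam) := by
              rw [Real.log_div (ne_of_gt hr) (ne_of_gt hlam), Real.log_rpow hx]
          _ ≤ Real.log (1 + (X i) ^ β / lam) := Real.log_le_log hpos (by linarith)
      calc β * S - (N : ℝ) * Real.log lam
          = ∑ i : Fin N, (β * Real.log (X i) - Real.log lam) := by
            rw [Finset.sum_sub_distrib, ← Finset.mul_sum]
            simp [hSdef]
        _ ≤ _ := Finset.sum_le_sum h1
    linarith
  refine tendsto_atBot_mono key ?_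
  apply tendsto_atBot_add_const_left
  have heq : (fun β : ℝ => (N : ℝ) * Real.log β - β * S)
      =ᶠ[atTop] fun β => β * ((N : ℝ) * (Real.log β / β) - S) := by
    filter_upwards [eventually_gt_atTop (0:ℝ)] with β hβ
    field_simp
  rw [Filter.tendsto_congr' heq]
  have hlim : Tendsto (fun β : ℝ => (N : ℝ) * (Real.log β / β) - S) atTop (nhds (-S)) := by
    have h0 : Tendsto (fun β : ℝ => Real.log β / β) atTop (nhds 0) :=
      Real.isLittleO_log_id_atTop.tendsto_div_nhds_zero
    have := (h0.const_mul (N : ℝ)).sub_const S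
    simpa using this
  exact tendsto_id.atTop_mul_neg (by linarith) hlim
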